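/- Let f and g be non-negative operator concave (in fact, it suffices to assume jointly concave in the matrix functional calculus sense for a fixed matrix size) functions of k real variables defined on a convex domain D in R^k. Then the function F(t_1,...,t_k) = f(t_1,...,t_k)^{1/2} g(t_1,...,t_k)^{1/2} is also operator concave on D. -/

import Mathlib

open Matrix
open scoped ComplexOrder

/-- The multivariate functional calculus `f(A_1,…,A_k)` acting on the tensor product,
defined via spectral decompositions: `∑_m f(λ_{m₁},…,λ_{m_k}) P_{m₁} ⊗ ⋯ ⊗ P_{m_k}`. -/
noncomputable def mvFun {k : ℕ} {n : Fin k → ℕ} (f : (Fin k → ℝ) → ℝ)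
    {A : ∀ i, Matrix (Fin (n i)) (Fin (n i)) ℂ} (hA : ∀ i, (A i).IsHermitian) :
    Matrix (∀ i, Fin (n i)) (∀ i, Fin (n i)) ℂ :=
  ∑ m : ∀ i, Fin (n i),
    (f (fun i => (hA i).eigenvalues (m i)) : ℂ) •
      Matrix.of (fun a b => ∏ i,
        ((hA i).eigenvectorBasis (m i) (a i)) * star ((hA i).eigenvectorBasis (m i) (b i)))

/-- `f` is matrix concave of order `(n 0, …, n (k-1))` on the convex domain `D`. -/
def MatrixConcaveOn {k : ℕ} (n : Fin k → ℕ) (D : Set (Fin k → ℝ))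
    (f : (Fin k → ℝ) → ℝ) : Prop :=
  ∀ (A B : ∀ i, Matrix (Fin (n i)) (Fin (n i)) ℂ)
    (hA : ∀ i, (A i).IsHermitian) (hB : ∀ i, (B i).IsHermitian)
    (_ : ∀ m : ∀ i, Fin (n i), (fun i => (hA i).eigenvalues (m i)) ∈ D)
    (_ : ∀ m : ∀ i, Fin (n i), (fun i => (hB i).eigenvalues (m i)) ∈ D)
    (a b : ℝ) (_ : 0 ≤ a) (_ : 0 ≤ b) (_ : a + b = 1)
    (hC : ∀ i, (a • A i + b • B i).IsHermitian)
    (_ : ∀ m : ∀ i, Fin (n i), (fun i => (hC i).eigenvalues (m i)) ∈ D),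
    (mvFun f hC - (a • mvFun f hA + b • mvFun f hB)).PosSemidef

namespace MvAux

variable {k : ℕ} {n : Fin k → ℕ} {A : ∀ i, Matrix (Fin (n i)) (Fin (n i)) ℂ}
  (hA : ∀ i, (A i).IsHermitian)

/-- the `m`-th tensor-product eigenvector -/
noncomputable def wvec (m : ∀ i, Fin (n i)) : (∀ i, Fin (n i)) → ℂ :=
  fun a => ∏ i, (hA i).eigenvectorBasis (m i) (a i)

/-- eigenvalue tuple -/
noncomputable def evTup (m : ∀ i, Fin (n i)) : Fin k → ℝ :=
  fun i => (hA i).eigenvalues (m i)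

lemma mvFun_eq (f : (Fin k → ℝ) → ℝ) :
    mvFun f hA = ∑ m, (f (evTup hA m) : ℂ) • vecMulVec (wvec hA m) (star (wvec hA m)) := by
  unfold mvFun
  refine Finset.sum_congr rfl fun m _ => ?_
  congr 1
  ext a b
  simp [vecMulVec_apply, wvec, Finset.prod_mul_distrib, Pi.star_apply, star_prod]

lemma wvec_orthonormal (m m' : ∀ i, Fin (n i)) :
    star (wvec hA m) ⬝ᵥ wvec hA m' = if m = m' then 1 else 0 := by
  classical
  have key : ∀ i, (∑ j : Fin (n i), star ((hA i).eigenvectorBasis (m i) j) *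
      ((hA i).eigenvectorBasis (m' i) j)) = if m i = m' i then 1 else 0 := by
    intro i
    have := orthonormal_iff_ite.mp (hA i).eigenvectorBasis.orthonormal (m i) (m' i)
    rw [← this]
    rw [EuclideanSpace.inner_eq_star_dotProduct]
    simp [dotProduct, mul_comm]
  have : star (wvec hA m) ⬝ᵥ wvec hA m' =
      ∏ i, (∑ j : Fin (n i), star ((hA i).eigenvectorBasis (m i) j) *
        ((hA i).eigenvectorBasis (m' i) j)) := by
    rw [Finset.prod_univ_sum]
    simp [dotProduct, wvec, Pi.star_apply, star_prod, Finset.prod_mul_distrib]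
  rw [this]
  simp only [key]
  by_cases h : m = m'
  · simp [h]
  · obtain ⟨i, hi⟩ := Function.ne_iff.mp h
    rw [if_neg h]
    exact Finset.prod_eq_zero (Finset.mem_univ i) (by simp [hi])

lemma wvec_complete :
    ∑ m, vecMulVec (wvec hA m) (star (wvec hA m)) = (1 : Matrix _ _ ℂ) := by
  classical
  ext a b
  have key : ∀ i, (∑ j : Fin (n i), (hA i).eigenvectorBasis j (a i) *
      star ((hA i).eigenvectorBasis j (b i))) = if a i = b i then 1 else 0 := by
    intro i
    have hU := (hA i).eigenvectorUnitary.2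
    have h1 : (hA i).eigenvectorUnitary.1 * star (hA i).eigenvectorUnitary.1 = 1 :=
      (Unitary.mem_iff.mp hU).2
    have h2 := congrFun (congrFun h1 (a i)) (b i)
    simpa [Matrix.mul_apply, Matrix.one_apply] using h2
  have expand : (∑ m, vecMulVec (wvec hA m) (star (wvec hA m))) a b =
      ∏ i, (∑ j : Fin (n i), (hA i).eigenvectorBasis j (a i) *
        star ((hA i).eigenvectorBasis j (b i))) := by
    rw [Finset.prod_univ_sum]
    simp [vecMulVec_apply, wvec, Pi.star_apply, star_prod, Finset.prod_mul_distrib,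
      Matrix.sum_apply]
  rw [Matrix.sum_apply] at expand ⊢
  rw [expand]
  simp only [key]
  by_cases h : a = b
  · simp [h, Matrix.one_apply]
  · obtain ⟨i, hi⟩ := Function.ne_iff.mp h
    rw [Matrix.one_apply, if_neg h]
    exact Finset.prod_eq_zero (Finset.mem_univ i) (by simp [hi])

/-- coefficient of `x` against the `m`-th eigenvector -/
noncomputable def coeff (m : ∀ i, Fin (n i)) (x : (∀ i, Fin (n i)) → ℂ) : ℂ :=
  star (wvec hA m) ⬝ᵥ x

lemma mvFun_mulVec (f : (Fin k → ℝ) → ℝ) (x : (∀ i, Fin (n i)) → ℂ) :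
    mvFun f hA *ᵥ x = ∑ m, ((f (evTup hA m) : ℂ) * coeff hA m x) • wvec hA m := by
  ext a
  rw [mvFun_eq]
  simp only [Matrix.mulVec, dotProduct, Matrix.sum_apply, Matrix.smul_apply,
    vecMulVec_apply, Pi.star_apply, smul_eq_mul, Finset.sum_apply, Finset.sum_mul,
    Pi.smul_apply, coeff]
  rw [Finset.sum_comm]
  refine Finset.sum_congr rfl fun m _ => ?_
  rw [Finset.mul_sum, Finset.sum_mul]
  exact Finset.sum_congr rfl fun b _ => by ring

lemma mvFun_dot (f : (Fin k → ℝ) → ℝ) (x y : (∀ i, Fin (n i)) → ℂ) :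
    star x ⬝ᵥ (mvFun f hA *ᵥ y) =
      ∑ m, (f (evTup hA m) : ℂ) * (coeff hA m y * star (coeff hA m x)) := by
  rw [mvFun_mulVec]
  simp only [dotProduct, Pi.star_apply, Finset.sum_apply, Pi.smul_apply, smul_eq_mul,
    Finset.mul_sum]
  rw [Finset.sum_comm]
  refine Finset.sum_congr rfl fun m _ => ?_
  have hx : (∑ a, star (x a) * wvec hA m a) = star (coeff hA m x) := by
    simp only [coeff, dotProduct, Pi.star_apply, star_sum, star_mul', star_star]
    refine Finset.sum_congr rfl fun a _ => by ring
  calc ∑ a, star (x a) * ((f (evTup hA m) : ℂ) * coeff hA m y * wvec hA m a)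
      = (f (evTup hA m) : ℂ) * coeff hA m y * ∑ a, star (x a) * wvec hA m a := by
        rw [Finset.mul_sum]; exact Finset.sum_congr rfl fun a _ => by ring
    _ = _ := by rw [hx]; ring

lemma mvFun_mul (f g : (Fin k → ℝ) → ℝ) :
    mvFun f hA * mvFun g hA = mvFun (fun t => f t * g t) hA := by
  classical
  rw [mvFun_eq, mvFun_eq, mvFun_eq, Finset.sum_mul]
  refine Finset.sum_congr rfl fun m _ => ?_
  rw [Finset.mul_sum]
  have key : ∀ m', ((f (evTup hA m) : ℂ) • vecMulVec (wvec hA m) (star (wvec hA m))) *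
      ((g (evTup hA m') : ℂ) • vecMulVec (wvec hA m') (star (wvec hA m'))) =
      if m' = m then ((f (evTup hA m) * g (evTup hA m) : ℝ) : ℂ) •
        vecMulVec (wvec hA m) (star (wvec hA m)) else 0 := by
    intro m'
    have hvv : vecMulVec (wvec hA m) (star (wvec hA m)) *
        vecMulVec (wvec hA m') (star (wvec hA m')) =
        (star (wvec hA m) ⬝ᵥ wvec hA m') • vecMulVec (wvec hA m) (star (wvec hA m')) := by
      ext a b
      simp [Matrix.mul_apply, vecMulVec_apply, dotProduct, Finset.sum_mul,
        Finset.mul_sum]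
      refine Finset.sum_congr rfl fun c _ => by ring
    by_cases h : m' = m
    · subst h
      rw [if_pos rfl, Matrix.smul_mul, Matrix.mul_smul, hvv, wvec_orthonormal, if_pos rfl,
        one_smul, smul_smul]
      push_cast
      ring_nf
    · rw [if_neg h, Matrix.smul_mul, Matrix.mul_smul, hvv, wvec_orthonormal,
        if_neg (fun hh => h hh.symm), zero_smul, smul_zero, smul_zero]
  rw [Finset.sum_congr rfl (fun m' _ => key m'), Finset.sum_ite_eq' Finset.univ m]
  simp

lemma mvFun_one : mvFun (fun _ => (1:ℝ)) hA = 1 := by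
  rw [mvFun_eq]
  simp [wvec_complete hA]

lemma mvFun_isHermitian (f : (Fin k → ℝ) → ℝ) : (mvFun f hA).IsHermitian := by
  apply Matrix.IsHermitian.ext
  intro a b
  rw [mvFun_eq]
  simp only [Matrix.sum_apply, Matrix.smul_apply, vecMulVec_apply, Pi.star_apply, star_sum,
    star_mul', star_star, smul_eq_mul, Complex.star_def, Complex.conj_ofReal, _root_.map_mul,
    Complex.conj_conj]
  refine Finset.sum_congr rfl fun m _ => by ring

lemma mvFun_congr {f g : (Fin k → ℝ) → ℝ} (h : ∀ m, f (evTup hA m) = g (evTup hA m)) :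
    mvFun f hA = mvFun g hA := by
  rw [mvFun_eq, mvFun_eq]
  exact Finset.sum_congr rfl fun m _ => by rw [h m]

lemma mvFun_add (f g : (Fin k → ℝ) → ℝ) :
    mvFun (fun t => f t + g t) hA = mvFun f hA + mvFun g hA := by
  rw [mvFun_eq, mvFun_eq, mvFun_eq, ← Finset.sum_add_distrib]
  refine Finset.sum_congr rfl fun m _ => ?_
  rw [Complex.ofReal_add, add_smul]

lemma mvFun_sub (f g : (Fin k → ℝ) → ℝ) :
    mvFun (fun t => f t - g t) hA = mvFun f hA - mvFun g hA := by
  rw [mvFun_eq, mvFun_eq, mvFun_eq, ← Finset.sum_sub_distrib]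
  refine Finset.sum_congr rfl fun m _ => ?_
  rw [Complex.ofReal_sub, sub_smul]

lemma mvFun_smul (a : ℝ) (f : (Fin k → ℝ) → ℝ) :
    a • mvFun f hA = mvFun (fun t => a * f t) hA := by
  rw [mvFun_eq, mvFun_eq, Finset.smul_sum]
  refine Finset.sum_congr rfl fun m _ => ?_
  rw [Complex.ofReal_mul, ← Complex.real_smul, smul_assoc]

lemma sum_normSq_coeff (x : (∀ i, Fin (n i)) → ℂ) :
    ∑ m, Complex.normSq (coeff hA m x) = ∑ a, Complex.normSq (x a) := by
  have h := mvFun_dot hA (fun _ => (1:ℝ)) x x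
  rw [mvFun_one, Matrix.one_mulVec] at h
  have hl : star x ⬝ᵥ x = ((∑ a, Complex.normSq (x a) : ℝ) : ℂ) := by
    push_cast
    simp only [dotProduct, Pi.star_apply, Complex.star_def]
    exact Finset.sum_congr rfl fun a _ => by rw [mul_comm, Complex.mul_conj]
  have hr : (∑ m, ((1:ℝ) : ℂ) * (coeff hA m x * star (coeff hA m x))) =
      ((∑ m, Complex.normSq (coeff hA m x) : ℝ) : ℂ) := by
    push_cast
    exact Finset.sum_congr rfl fun m _ => by
      rw [one_mul, Complex.star_def, Complex.mul_conj]
  rw [hl, hr] at h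
  exact_mod_cast h.symm

lemma mvFun_dot_real (f : (Fin k → ℝ) → ℝ) (x : (∀ i, Fin (n i)) → ℂ) :
    star x ⬝ᵥ (mvFun f hA *ᵥ x) =
      ((∑ m, f (evTup hA m) * Complex.normSq (coeff hA m x) : ℝ) : ℂ) := by
  rw [mvFun_dot]
  push_cast
  exact Finset.sum_congr rfl fun m _ => by
    rw [Complex.star_def, Complex.mul_conj]

lemma mvFun_posSemidef (f : (Fin k → ℝ) → ℝ) (h : ∀ m, 0 ≤ f (evTup hA m)) :
    (mvFun f hA).PosSemidef := by
  refine PosSemidef.of_dotProduct_mulVec_nonneg (mvFun_isHermitian hA f) fun x => ?_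
  rw [mvFun_dot_real]
  rw [Complex.zero_le_real]
  exact Finset.sum_nonneg fun m _ =>
    mul_nonneg (h m) (Complex.normSq_nonneg _)

lemma mvFun_posDef (f : (Fin k → ℝ) → ℝ) (h : ∀ m, 0 < f (evTup hA m)) :
    (mvFun f hA).PosDef := by
  refine PosDef.of_dotProduct_mulVec_pos (mvFun_isHermitian hA f) fun x hx => ?_
  rw [mvFun_dot_real]
  rw [Complex.zero_lt_real]
  have hxpos : 0 < ∑ a, Complex.normSq (x a) := by
    obtain ⟨a, ha⟩ := Function.ne_iff.mp hx
    exact Finset.sum_pos' (fun a _ => Complex.normSq_nonneg _)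
      ⟨a, Finset.mem_univ a, by simpa using (Complex.normSq_pos).mpr ha⟩
  rw [← sum_normSq_coeff hA x] at hxpos
  obtain ⟨m, _, hm⟩ := Finset.exists_lt_of_sum_lt
    (by simpa using hxpos : (∑ _m : ∀ i, Fin (n i), (0:ℝ)) < ∑ m, Complex.normSq (coeff hA m x))
  exact Finset.sum_pos' (fun m _ => mul_nonneg (h m).le (Complex.normSq_nonneg _))
    ⟨m, Finset.mem_univ m, mul_pos (h m) hm⟩

/-- quadratic form of a block matrix -/
lemma quad_fromBlocks {m' n' : Type*} [Fintype m'] [Fintype n']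
    (P : Matrix m' m' ℂ) (Q : Matrix m' n' ℂ) (R : Matrix n' m' ℂ) (S : Matrix n' n' ℂ)
    (x : m' ⊕ n' → ℂ) :
    star x ⬝ᵥ (fromBlocks P Q R S *ᵥ x) =
      star (x ∘ Sum.inl) ⬝ᵥ (P *ᵥ (x ∘ Sum.inl)) + star (x ∘ Sum.inl) ⬝ᵥ (Q *ᵥ (x ∘ Sum.inr)) +
      (star (x ∘ Sum.inr) ⬝ᵥ (R *ᵥ (x ∘ Sum.inl)) +
        star (x ∘ Sum.inr) ⬝ᵥ (S *ᵥ (x ∘ Sum.inr))) := by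
  conv_lhs => rw [← Sum.elim_comp_inl_inr x]
  rw [fromBlocks_mulVec, Function.star_sumElim, sumElim_dotProduct_sumElim,
    dotProduct_add, dotProduct_add]
  simp only [Sum.elim_comp_inl, Sum.elim_comp_inr]

lemma posSemidef_real_smul {m' : Type*} [Fintype m'] {M : Matrix m' m' ℂ}
    (hM : M.PosSemidef) {a : ℝ} (ha : 0 ≤ a) : (a • M).PosSemidef := by
  have h : a • M = (a : ℂ) • M := by
    ext i j; simp [Complex.real_smul]
  rw [h]
  refine PosSemidef.of_dotProduct_mulVec_nonneg ?_ fun x => ?_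
  · apply Matrix.IsHermitian.ext
    intro i j
    simp [Matrix.smul_apply, hM.1.apply i j, Complex.conj_ofReal]
  · rw [smul_mulVec, dotProduct_smul, smul_eq_mul]
    exact mul_nonneg (by exact_mod_cast Complex.zero_le_real.mpr ha) (hM.dotProduct_mulVec_nonneg x)

lemma posSemidef_fromBlocks_diag {m' n' : Type*} [Fintype m'] [Fintype n']
    [DecidableEq m'] [DecidableEq n']
    {P : Matrix m' m' ℂ} {Q : Matrix n' n' ℂ} (hP : P.PosSemidef) (hQ : Q.PosSemidef) :
    (fromBlocks P 0 0 Q).PosSemidef := by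
  refine PosSemidef.of_dotProduct_mulVec_nonneg (IsHermitian.fromBlocks hP.1 (by simp) hQ.1) fun x => ?_
  rw [quad_fromBlocks]
  simp only [Matrix.zero_mulVec, dotProduct_zero, add_zero, zero_add]
  exact add_nonneg (hP.dotProduct_mulVec_nonneg _) (hQ.dotProduct_mulVec_nonneg _)

/-- The 2×2 operator block `[[f+ε, √f√g],[√f√g, g+ε]]` in the same basis is PSD. -/
lemma block_psd (f g : (Fin k → ℝ) → ℝ) (ε : ℝ) (hε : 0 ≤ ε)
    (hfA : ∀ m, 0 ≤ f (evTup hA m)) (hgA : ∀ m, 0 ≤ g (evTup hA m)) :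
    (fromBlocks (mvFun (fun t => f t + ε) hA)
      (mvFun (fun t => Real.sqrt (f t) * Real.sqrt (g t)) hA)
      (mvFun (fun t => Real.sqrt (f t) * Real.sqrt (g t)) hA)
      (mvFun (fun t => g t + ε) hA)).PosSemidef := by
  classical
  refine PosSemidef.of_dotProduct_mulVec_nonneg (IsHermitian.fromBlocks (mvFun_isHermitian hA _)
    ((mvFun_isHermitian hA _).eq) (mvFun_isHermitian hA _)) fun x => ?_
  rw [quad_fromBlocks]
  rw [mvFun_dot, mvFun_dot, mvFun_dot, mvFun_dot]
  rw [← Finset.sum_add_distrib, ← Finset.sum_add_distrib, ← Finset.sum_add_distrib]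
  apply Finset.sum_nonneg
  intro m _
  set c1 := coeff hA m (x ∘ Sum.inl) with hc1
  set c2 := coeff hA m (x ∘ Sum.inr) with hc2
  set p := Real.sqrt (f (evTup hA m)) with hp
  set q := Real.sqrt (g (evTup hA m)) with hq
  have hf' : f (evTup hA m) = p ^ 2 := (Real.sq_sqrt (hfA m)).symm
  have hg' : g (evTup hA m) = q ^ 2 := (Real.sq_sqrt (hgA m)).symm
  have expand : ((f (evTup hA m) + ε : ℝ) : ℂ) * (c1 * star c1) +
      ((p * q : ℝ) : ℂ) * (c2 * star c1) +
      (((p * q : ℝ) : ℂ) * (c1 * star c2) +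
        ((g (evTup hA m) + ε : ℝ) : ℂ) * (c2 * star c2)) =
      ((p : ℂ) * c1 + (q : ℂ) * c2) * star ((p : ℂ) * c1 + (q : ℂ) * c2) +
        ((ε : ℂ) * (c1 * star c1) + (ε : ℂ) * (c2 * star c2)) := by
    rw [hf', hg']
    push_cast
    simp only [star_add, star_mul', Complex.star_def, Complex.conj_ofReal]
    ring
  rw [expand]
  have h1 : (0:ℂ) ≤ ((p : ℂ) * c1 + (q : ℂ) * c2) * star ((p : ℂ) * c1 + (q : ℂ) * c2) :=
    mul_star_self_nonneg _
  have hε' : (0:ℂ) ≤ (ε : ℂ) := Complex.zero_le_real.mpr hε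
  exact add_nonneg h1 (add_nonneg (mul_nonneg hε' (mul_star_self_nonneg _))
    (mul_nonneg hε' (mul_star_self_nonneg _)))

end MvAux

namespace MvAux

set_option maxHeartbeats 1600000 in
lemma geom_key {k : ℕ} {n : Fin k → ℕ} {A B : ∀ i, Matrix (Fin (n i)) (Fin (n i)) ℂ}
    (hA : ∀ i, (A i).IsHermitian) (hB : ∀ i, (B i).IsHermitian)
    {a b : ℝ} (ha : 0 ≤ a) (hb : 0 ≤ b) (hab : a + b = 1)
    (hC : ∀ i, (a • A i + b • B i).IsHermitian)
    (f g : (Fin k → ℝ) → ℝ)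
    (hfA : ∀ m, 0 ≤ f (evTup hA m)) (hgA : ∀ m, 0 ≤ g (evTup hA m))
    (hfB : ∀ m, 0 ≤ f (evTup hB m)) (hgB : ∀ m, 0 ≤ g (evTup hB m))
    (hfC : ∀ m, 0 ≤ f (evTup hC m)) (hgC : ∀ m, 0 ≤ g (evTup hC m))
    (hconcf : (mvFun f hC - (a • mvFun f hA + b • mvFun f hB)).PosSemidef)
    (hconcg : (mvFun g hC - (a • mvFun g hA + b • mvFun g hB)).PosSemidef)
    {ε : ℝ} (hε : 0 < ε) :
    (mvFun (fun t => Real.sqrt ((f t + ε) * (g t + ε))) hC -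
      (a • mvFun (fun t => Real.sqrt (f t) * Real.sqrt (g t)) hA +
       b • mvFun (fun t => Real.sqrt (f t) * Real.sqrt (g t)) hB)).PosSemidef := by
  classical
  set F : (Fin k → ℝ) → ℝ := fun t => Real.sqrt (f t) * Real.sqrt (g t) with hF
  set fe : (Fin k → ℝ) → ℝ := fun t => f t + ε with hfe
  set ge : (Fin k → ℝ) → ℝ := fun t => g t + ε with hge
  set Fe : (Fin k → ℝ) → ℝ := fun t => Real.sqrt (fe t * ge t) with hFe
  set M' : Matrix (∀ i, Fin (n i)) (∀ i, Fin (n i)) ℂ :=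
    a • mvFun F hA + b • mvFun F hB with hM'
  show (mvFun Fe hC - M').PosSemidef
  have hfeC : ∀ m, 0 < fe (evTup hC m) := fun m => add_pos_of_nonneg_of_pos (hfC m) hε
  have hgeC : ∀ m, 0 < ge (evTup hC m) := fun m => add_pos_of_nonneg_of_pos (hgC m) hε
  have hFeC : ∀ m, 0 < Fe (evTup hC m) := fun m =>
    Real.sqrt_pos.mpr (mul_pos (hfeC m) (hgeC m))
  have hFnn : ∀ t, 0 ≤ F t := fun t => mul_nonneg (Real.sqrt_nonneg _) (Real.sqrt_nonneg _)
  have hM'psd : M'.PosSemidef :=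
    (posSemidef_real_smul (mvFun_posSemidef hA F (fun m => hFnn _)) ha).add
      (posSemidef_real_smul (mvFun_posSemidef hB F (fun m => hFnn _)) hb)
  have hM'h : M'ᴴ = M' := hM'psd.1
  -- decomposition of the shifted functions
  have hdec : ∀ (A' : ∀ i, Matrix (Fin (n i)) (Fin (n i)) ℂ)
      (hA' : ∀ i, (A' i).IsHermitian) (h : (Fin k → ℝ) → ℝ),
      mvFun (fun t => h t + ε) hA' = mvFun h hA' + ε • 1 := by
    intro A' hA' h
    rw [mvFun_add hA' h (fun _ => ε)]
    congr 1
    have h2 := mvFun_smul hA' ε (fun _ => (1:ℝ))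
    rw [mvFun_one] at h2
    simp only [mul_one] at h2
    exact h2.symm
  have hab1 : a • (ε • (1 : Matrix (∀ i, Fin (n i)) (∀ i, Fin (n i)) ℂ)) + b • (ε • 1)
      = ε • 1 := by rw [← add_smul, hab, one_smul]
  have hDf : mvFun fe hC - (a • mvFun fe hA + b • mvFun fe hB)
      = mvFun f hC - (a • mvFun f hA + b • mvFun f hB) := by
    rw [show mvFun fe hC = mvFun (fun t => f t + ε) hC from rfl,
      show mvFun fe hA = mvFun (fun t => f t + ε) hA from rfl,
      show mvFun fe hB = mvFun (fun t => f t + ε) hB from rfl,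
      hdec _ hC f, hdec _ hA f, hdec _ hB f, smul_add, smul_add]
    rw [show a • mvFun f hA + a • (ε • (1 : Matrix (∀ i, Fin (n i)) (∀ i, Fin (n i)) ℂ)) +
        (b • mvFun f hB + b • (ε • 1)) =
        a • mvFun f hA + b • mvFun f hB + (a • (ε • 1) + b • (ε • 1)) from by abel, hab1]
    abel
  have hDg : mvFun ge hC - (a • mvFun ge hA + b • mvFun ge hB)
      = mvFun g hC - (a • mvFun g hA + b • mvFun g hB) := by
    rw [show mvFun ge hC = mvFun (fun t => g t + ε) hC from rfl,
      show mvFun ge hA = mvFun (fun t => g t + ε) hA from rfl,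
      show mvFun ge hB = mvFun (fun t => g t + ε) hB from rfl,
      hdec _ hC g, hdec _ hA g, hdec _ hB g, smul_add, smul_add]
    rw [show a • mvFun g hA + a • (ε • (1 : Matrix (∀ i, Fin (n i)) (∀ i, Fin (n i)) ℂ)) +
        (b • mvFun g hB + b • (ε • 1)) =
        a • mvFun g hA + b • mvFun g hB + (a • (ε • 1) + b • (ε • 1)) from by abel, hab1]
    abel
  -- the big block matrix is PSD
  have hblkA := block_psd hA f g ε hε.le hfA hgA
  have hblkB := block_psd hB f g ε hε.le hfB hgB
  have e11 : mvFun fe hC = a • mvFun fe hA + b • mvFun fe hB +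
      (mvFun fe hC - (a • mvFun fe hA + b • mvFun fe hB)) := by abel
  have e22 : mvFun ge hC = a • mvFun ge hA + b • mvFun ge hB +
      (mvFun ge hC - (a • mvFun ge hA + b • mvFun ge hB)) := by abel
  have e12 : M' = a • mvFun F hA + b • mvFun F hB + 0 := by rw [hM', add_zero]
  have hdecomp : fromBlocks (mvFun fe hC) M' M' (mvFun ge hC) =
      a • fromBlocks (mvFun fe hA) (mvFun F hA) (mvFun F hA) (mvFun ge hA) +
      b • fromBlocks (mvFun fe hB) (mvFun F hB) (mvFun F hB) (mvFun ge hB) +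
      fromBlocks (mvFun fe hC - (a • mvFun fe hA + b • mvFun fe hB)) 0 0
        (mvFun ge hC - (a • mvFun ge hA + b • mvFun ge hB)) := by
    rw [fromBlocks_smul, fromBlocks_smul, fromBlocks_add, fromBlocks_add]
    conv_lhs => rw [e11, e12, e22]
  have hblock : (fromBlocks (mvFun fe hC) M' M'ᴴ (mvFun ge hC)).PosSemidef := by
    rw [hM'h, hdecomp]
    refine ((posSemidef_real_smul hblkA ha).add (posSemidef_real_smul hblkB hb)).add
      (posSemidef_fromBlocks_diag ?_ ?_)
    · rw [hDf]; exact hconcf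
    · rw [hDg]; exact hconcg
  -- Schur complement
  have hXpd : (mvFun fe hC).PosDef := mvFun_posDef hC fe hfeC
  have hXW : mvFun fe hC * mvFun (fun t => (fe t)⁻¹) hC = 1 := by
    rw [mvFun_mul, mvFun_congr hC (g := fun _ => (1:ℝ)) (fun m => mul_inv_cancel₀ (hfeC m).ne'), mvFun_one]
  haveI : Invertible (mvFun fe hC) := invertibleOfRightInverse _ _ hXW
  have hXinv : (mvFun fe hC)⁻¹ = mvFun (fun t => (fe t)⁻¹) hC := inv_eq_right_inv hXW
  have hschur : (mvFun ge hC - M'ᴴ * (mvFun fe hC)⁻¹ * M').PosSemidef :=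
    (PosDef.fromBlocks₁₁ M' (mvFun ge hC) hXpd).mp hblock
  rw [hM'h, hXinv] at hschur
  -- conjugating by G^{-1/2}
  set J : Matrix (∀ i, Fin (n i)) (∀ i, Fin (n i)) ℂ :=
    mvFun (fun t => (Real.sqrt (Fe t))⁻¹) hC with hJ
  set L : Matrix (∀ i, Fin (n i)) (∀ i, Fin (n i)) ℂ :=
    mvFun (fun t => Real.sqrt (Fe t)) hC with hL
  set S : Matrix (∀ i, Fin (n i)) (∀ i, Fin (n i)) ℂ :=
    mvFun (fun t => Fe t / fe t) hC with hSdef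
  have hJh : Jᴴ = J := mvFun_isHermitian hC _
  have hLh : Lᴴ = L := mvFun_isHermitian hC _
  set K : Matrix (∀ i, Fin (n i)) (∀ i, Fin (n i)) ℂ := J * M' * J with hK
  have hKpsd : K.PosSemidef := by
    have := hM'psd.mul_mul_conjTranspose_same J
    rwa [hJh] at this
  have hSpd : S.PosDef := mvFun_posDef hC _ (fun m => div_pos (hFeC m) (hfeC m))
  have hsqFe : ∀ m, Real.sqrt (Fe (evTup hC m)) * Real.sqrt (Fe (evTup hC m))
      = Fe (evTup hC m) := fun m => Real.mul_self_sqrt (hFeC m).le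
  have hJSJ : J * S * J = mvFun (fun t => (fe t)⁻¹) hC := by
    rw [hJ, hSdef, mvFun_mul, mvFun_mul]
    apply mvFun_congr
    intro m
    have hs : Real.sqrt (Fe (evTup hC m)) ≠ 0 := (Real.sqrt_pos.mpr (hFeC m)).ne'
    have hf' : fe (evTup hC m) ≠ 0 := (hfeC m).ne'
    field_simp
    linarith [hsqFe m]
  have hJYJ : J * mvFun ge hC * J = S := by
    rw [hJ, hSdef, mvFun_mul, mvFun_mul]
    apply mvFun_congr
    intro m
    have hs : Real.sqrt (Fe (evTup hC m)) ≠ 0 := (Real.sqrt_pos.mpr (hFeC m)).ne'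
    have hf' : fe (evTup hC m) ≠ 0 := (hfeC m).ne'
    have hFne : Fe (evTup hC m) ≠ 0 := (hFeC m).ne'
    have hFe2 : Fe (evTup hC m) * Fe (evTup hC m) = fe (evTup hC m) * ge (evTup hC m) := by
      rw [show Fe (evTup hC m) = Real.sqrt (fe (evTup hC m) * ge (evTup hC m)) from rfl]
      exact Real.mul_self_sqrt (mul_pos (hfeC m) (hgeC m)).le
    field_simp
    nlinarith [hFe2, hsqFe m]

  have hKSK : S - K * S * K =
      J * (mvFun ge hC - M' * mvFun (fun t => (fe t)⁻¹) hC * M') * J := by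
    have e1 : K * S * K = J * (M' * mvFun (fun t => (fe t)⁻¹) hC * M') * J := by
      rw [hK]
      rw [show J * M' * J * S * (J * M' * J) = J * (M' * (J * S * J) * M') * J from by
        simp only [Matrix.mul_assoc], hJSJ]
    rw [Matrix.mul_sub, Matrix.sub_mul, e1, hJYJ]
  have hSKSKpsd : (S - K * S * K).PosSemidef := by
    rw [hKSK]
    have := hschur.mul_mul_conjTranspose_same J
    rwa [hJh] at this
  -- all eigenvalues of K are ≤ 1
  have hKh : K.IsHermitian := hKpsd.1
  have hmu : ∀ j, hKh.eigenvalues j ≤ 1 := by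
    intro j
    set u : (∀ i, Fin (n i)) → ℂ := ⇑(hKh.eigenvectorBasis j) with hu
    have hu0 : u ≠ 0 := fun h =>
      (hKh.eigenvectorBasis.orthonormal.ne_zero j) (by ext a; exact congrFun h a)
    have hq := hSpd.dotProduct_mulVec_pos hu0
    set μ : ℝ := hKh.eigenvalues j with hμ
    have hKu : K *ᵥ u = (μ : ℂ) • u := by
      rw [hu, hKh.mulVec_eigenvectorBasis j]
      ext a
      simp [Complex.real_smul, hμ]
    have hrow : star u ᵥ* K = (μ : ℂ) • star u := by
      have h1 : star (K *ᵥ u) = star u ᵥ* Kᴴ := star_mulVec K u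
      rw [hKh.eq, hKu, star_smul] at h1
      rw [← h1]
      congr 1
      simp [Complex.star_def, Complex.conj_ofReal]
    have hcalc : star u ⬝ᵥ ((K * S * K) *ᵥ u) = ((μ^2 : ℝ) : ℂ) * (star u ⬝ᵥ (S *ᵥ u)) := by
      rw [← Matrix.mulVec_mulVec, ← Matrix.mulVec_mulVec, hKu, mulVec_smul, mulVec_smul,
        dotProduct_smul, dotProduct_mulVec, hrow, smul_dotProduct, smul_smul, smul_eq_mul]
      push_cast
      ring
    have h0 := hSKSKpsd.dotProduct_mulVec_nonneg u
    rw [Matrix.sub_mulVec, dotProduct_sub, hcalc] at h0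
    have hqre := (Complex.lt_def.mp hq)
    have h0re := (Complex.le_def.mp h0)
    simp only [Complex.zero_re, Complex.zero_im, Complex.sub_re, Complex.sub_im,
      Complex.mul_re, Complex.mul_im, Complex.ofReal_re, Complex.ofReal_im] at hqre h0re
    have hq1 : 0 < (star u ⬝ᵥ (S *ᵥ u)).re := hqre.1
    have h2 : μ ^ 2 * (star u ⬝ᵥ (S *ᵥ u)).re ≤ (star u ⬝ᵥ (S *ᵥ u)).re := by
      nlinarith [h0re.1]
    have h3 : μ ^ 2 ≤ 1 := by nlinarith [h2, hq1]
    nlinarith [h3]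
  -- hence 1 - K is PSD
  have hK1 : ((1 : Matrix (∀ i, Fin (n i)) (∀ i, Fin (n i)) ℂ) - K).PosSemidef := by
    have spec := hKh.spectral_theorem
    simp only [Unitary.conjStarAlgAut_apply, Unitary.coe_star] at spec
    have hU : (hKh.eigenvectorUnitary : Matrix (∀ i, Fin (n i)) (∀ i, Fin (n i)) ℂ) *
        star (hKh.eigenvectorUnitary : Matrix (∀ i, Fin (n i)) (∀ i, Fin (n i)) ℂ) = 1 :=
      mem_unitaryGroup_iff.mp hKh.eigenvectorUnitary.2
    have hdiag : ((1 : Matrix (∀ i, Fin (n i)) (∀ i, Fin (n i)) ℂ) -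
        diagonal (RCLike.ofReal ∘ hKh.eigenvalues)).PosSemidef := by
      rw [← diagonal_one, diagonal_sub]
      refine PosSemidef.diagonal fun j => ?_
      show (0 : ℂ) ≤ (1 : ℂ) - ((hKh.eigenvalues j : ℝ) : ℂ)
      rw [show ((1:ℂ) - ((hKh.eigenvalues j : ℝ) : ℂ)) = ((1 - hKh.eigenvalues j : ℝ) : ℂ) by
        push_cast; ring]
      exact Complex.zero_le_real.mpr (by linarith [hmu j])
    have h1K : (1 : Matrix (∀ i, Fin (n i)) (∀ i, Fin (n i)) ℂ) - K =
        (hKh.eigenvectorUnitary : Matrix (∀ i, Fin (n i)) (∀ i, Fin (n i)) ℂ) *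
        ((1 : Matrix (∀ i, Fin (n i)) (∀ i, Fin (n i)) ℂ) -
          diagonal (RCLike.ofReal ∘ hKh.eigenvalues)) *
        star (hKh.eigenvectorUnitary : Matrix (∀ i, Fin (n i)) (∀ i, Fin (n i)) ℂ) := by
      rw [Matrix.mul_sub, Matrix.mul_one, Matrix.sub_mul, hU, ← spec]
    rw [h1K, Matrix.star_eq_conjTranspose]
    exact hdiag.mul_mul_conjTranspose_same _
  -- reassemble
  have hLJ : L * J = 1 := by
    rw [hL, hJ, mvFun_mul,
      mvFun_congr hC (g := fun _ => (1:ℝ))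
        (fun m => mul_inv_cancel₀ (Real.sqrt_pos.mpr (hFeC m)).ne'), mvFun_one]
  have hJL : J * L = 1 := by
    rw [hL, hJ, mvFun_mul,
      mvFun_congr hC (g := fun _ => (1:ℝ))
        (fun m => inv_mul_cancel₀ (Real.sqrt_pos.mpr (hFeC m)).ne'), mvFun_one]
  have hLL : L * L = mvFun Fe hC := by
    rw [hL, mvFun_mul]
    exact mvFun_congr hC (fun m => hsqFe m)
  have hLKL : L * K * L = M' := by
    rw [hK, show L * (J * M' * J) * L = L * J * (M' * (J * L)) from by
      simp only [Matrix.mul_assoc], hLJ, hJL, one_mul, mul_one]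
  have hfinal : mvFun Fe hC - M' =
      L * ((1 : Matrix (∀ i, Fin (n i)) (∀ i, Fin (n i)) ℂ) - K) * L := by
    rw [Matrix.mul_sub, Matrix.mul_one, Matrix.sub_mul, hLL, hLKL]
  rw [hfinal]
  have := hK1.mul_mul_conjTranspose_same L
  rwa [hLh] at this

end MvAux

open MvAux in
/-- If `f` and `g` are non-negative and matrix concave of order `(n₁,…,n_k)` on a convex
domain `D ⊆ ℝᵏ`, then `F = f^{1/2} g^{1/2}` is matrix concave of the same order on `D`. -/
theorem geometric_mean_of_matrix_concave {k : ℕ} (n : Fin k → ℕ)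
    (D : Set (Fin k → ℝ)) (hD : Convex ℝ D) (f g : (Fin k → ℝ) → ℝ)
    (hf0 : ∀ t ∈ D, 0 ≤ f t) (hg0 : ∀ t ∈ D, 0 ≤ g t)
    (hf : MatrixConcaveOn n D f) (hg : MatrixConcaveOn n D g) :
    MatrixConcaveOn n D (fun t => Real.sqrt (f t) * Real.sqrt (g t)) := by
  classical
  intro A B hA hB hDA hDB a b ha hb hab hC hDC
  have hfA : ∀ m, 0 ≤ f (evTup hA m) := fun m => hf0 _ (hDA m)
  have hgA : ∀ m, 0 ≤ g (evTup hA m) := fun m => hg0 _ (hDA m)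
  have hfB : ∀ m, 0 ≤ f (evTup hB m) := fun m => hf0 _ (hDB m)
  have hgB : ∀ m, 0 ≤ g (evTup hB m) := fun m => hg0 _ (hDB m)
  have hfC : ∀ m, 0 ≤ f (evTup hC m) := fun m => hf0 _ (hDC m)
  have hgC : ∀ m, 0 ≤ g (evTup hC m) := fun m => hg0 _ (hDC m)
  have hconcf := hf A B hA hB hDA hDB a b ha hb hab hC hDC
  have hconcg := hg A B hA hB hDA hDB a b ha hb hab hC hDC
  set F : (Fin k → ℝ) → ℝ := fun t => Real.sqrt (f t) * Real.sqrt (g t) with hF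
  set M' : Matrix (∀ i, Fin (n i)) (∀ i, Fin (n i)) ℂ :=
    a • mvFun F hA + b • mvFun F hB with hM'
  have hkey : ∀ e : ℝ, 0 < e →
      (mvFun (fun t => Real.sqrt ((f t + e) * (g t + e))) hC - M').PosSemidef :=
    fun e he => geom_key hA hB ha hb hab hC f g hfA hgA hfB hgB hfC hgC hconcf hconcg he
  have hM'herm : M'.IsHermitian := by
    have h1 : (a • mvFun F hA).IsHermitian := by
      apply Matrix.IsHermitian.ext
      intro i j
      simp only [Matrix.smul_apply]
      rw [star_smul, (mvFun_isHermitian hA F).apply i j]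
      simp
    have h2 : (b • mvFun F hB).IsHermitian := by
      apply Matrix.IsHermitian.ext
      intro i j
      simp only [Matrix.smul_apply]
      rw [star_smul, (mvFun_isHermitian hB F).apply i j]
      simp
    exact h1.add h2
  refine PosSemidef.of_dotProduct_mulVec_nonneg ((mvFun_isHermitian hC F).sub hM'herm) fun x => ?_
  set z : ℂ := star x ⬝ᵥ ((mvFun F hC - M') *ᵥ x) with hzdef
  set q2 : ℝ → ℝ := fun e => ∑ m,
    (Real.sqrt ((f (evTup hC m) + e) * (g (evTup hC m) + e)) - F (evTup hC m)) *
      Complex.normSq (coeff hC m x) with hq2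
  have hsplit : ∀ e : ℝ, 0 < e → z =
      (star x ⬝ᵥ ((mvFun (fun t => Real.sqrt ((f t + e) * (g t + e))) hC - M') *ᵥ x)) -
        ((q2 e : ℝ) : ℂ) := by
    intro e he
    have hmat : mvFun F hC - M' =
        (mvFun (fun t => Real.sqrt ((f t + e) * (g t + e))) hC - M') -
          mvFun (fun t => Real.sqrt ((f t + e) * (g t + e)) - F t) hC := by
      rw [mvFun_sub hC]
      abel
    rw [hzdef, hmat, Matrix.sub_mulVec, dotProduct_sub, mvFun_dot_real]
  have hq1 : ∀ e : ℝ, 0 < e →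
      0 ≤ star x ⬝ᵥ ((mvFun (fun t => Real.sqrt ((f t + e) * (g t + e))) hC - M') *ᵥ x) :=
    fun e he => (hkey e he).dotProduct_mulVec_nonneg x
  have him : z.im = 0 := by
    have h1 := hsplit 1 one_pos
    have h2 := (Complex.le_def.mp (hq1 1 one_pos)).2
    rw [h1]
    simp only [Complex.sub_im, Complex.ofReal_im, ← h2, Complex.zero_im]
    ring
  have hre : ∀ e : ℝ, 0 < e → -(q2 e) ≤ z.re := by
    intro e he
    have h1 := hsplit e he
    have h2 := (Complex.le_def.mp (hq1 e he)).1
    rw [h1]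
    simp only [Complex.sub_re, Complex.ofReal_re, Complex.zero_re] at h2 ⊢
    linarith
  have hq2cont : Continuous q2 := by
    rw [hq2]
    apply continuous_finset_sum
    intro m _
    exact ((Real.continuous_sqrt.comp (((continuous_const.add continuous_id).mul
      (continuous_const.add continuous_id)))).sub continuous_const).mul continuous_const
  have hq20 : q2 0 = 0 := by
    rw [hq2]
    apply Finset.sum_eq_zero
    intro m _
    rw [add_zero, add_zero, Real.sqrt_mul (hfC m)]
    simp [hF]
  have htend : Filter.Tendsto (fun e => -(q2 e)) (nhdsWithin 0 (Set.Ioi 0)) (nhds 0) := by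
    have h1 : Filter.Tendsto q2 (nhdsWithin 0 (Set.Ioi 0)) (nhds 0) := by
      have := (hq2cont.tendsto 0).mono_left (nhdsWithin_le_nhds (s := Set.Ioi 0))
      rwa [hq20] at this
    simpa using h1.neg
  have hre0 : 0 ≤ z.re := by
    refine le_of_tendsto htend ?_
    exact Filter.eventually_of_mem self_mem_nhdsWithin (fun e he => hre e he)
  rw [Complex.le_def]
  exact ⟨by simpa using hre0, by simp [him]⟩
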